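/- arXiv:2303.00503 — 2 statements merged into one kernel-verified Lean document; each statement's English description precedes it below -/
import Mathlib

section
/- Let z, p : ℕ → ℚ be sequences with z(1) = 1. Suppose that as formal power series over ℚ, 1 + Σ_{d≥1} (z(d+1)/(2d)!)·x^d = exp( Σ_{k≥1} (p(k)·z(k)/(2k)!)·x^k ). Then for every d ≥ 2, z(d) = Σ_{k=1}^{d−1} z(k)·z(d−k)·p(k)·C(2d−3, 2k−1), where C denotes the binomial coefficient. -/
/-- Formal exponential of a power series with zero constant term: the `n`-th
coefficient of `exp G = Σ_{k≥0} G^k / k!` (only `k ≤ n` contribute). -/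
noncomputable def formalExp (G : PowerSeries ℚ) : PowerSeries ℚ :=
  PowerSeries.mk fun n =>
    ∑ k ∈ Finset.range (n + 1), PowerSeries.coeff (R := ℚ) n (G ^ k) / (Nat.factorial k)

open PowerSeries Finset

lemma aux_coeff_pow_zero {G : PowerSeries ℚ} (hG : constantCoeff (R := ℚ) G = 0)
    {m k : ℕ} (h : m < k) : coeff (R := ℚ) m (G ^ k) = 0 := by
  obtain ⟨H, hH⟩ := X_dvd_iff.2 hG
  rw [hH, mul_pow, coeff_X_pow_mul', if_neg (by omega)]

lemma aux_coeff_formalExp {G : PowerSeries ℚ} (hG : constantCoeff (R := ℚ) G = 0)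
    {j n : ℕ} (hj : j ≤ n) :
    coeff (R := ℚ) j (formalExp G) =
      ∑ k ∈ range (n + 1), coeff (R := ℚ) j (G ^ k) / (Nat.factorial k) := by
  rw [formalExp, coeff_mk]
  refine Finset.sum_subset (by intro k hk; simp_all; omega) ?_
  intro k hk hk'
  simp only [mem_range] at hk hk'
  rw [aux_coeff_pow_zero hG (by omega), zero_div]

lemma aux_deriv {G : PowerSeries ℚ} (hG : constantCoeff (R := ℚ) G = 0) :
    PowerSeries.derivative ℚ (formalExp G)
      = PowerSeries.derivative ℚ G * formalExp G := by
  ext n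
  rw [coeff_derivative, coeff_mul]
  conv_lhs => rw [formalExp, coeff_mk]
  rw [Finset.sum_mul, Finset.sum_range_succ']
  have h0 : coeff (R := ℚ) (n + 1) (G ^ 0) / (Nat.factorial 0) * (n + 1) = 0 := by
    simp [coeff_one]
  rw [h0, add_zero]
  have hterm : ∀ k, coeff (R := ℚ) (n + 1) (G ^ (k + 1)) / (Nat.factorial (k + 1)) * (n + 1)
      = coeff (R := ℚ) n (PowerSeries.derivative ℚ G * G ^ k) / (Nat.factorial k) := by
    intro k
    have h1 : coeff (R := ℚ) n ((PowerSeries.derivative ℚ) (G ^ (k + 1)))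
        = coeff (R := ℚ) (n + 1) (G ^ (k + 1)) * (n + 1) := coeff_derivative _ _
    rw [Derivation.leibniz_pow] at h1
    simp only [Nat.add_sub_cancel, map_nsmul, smul_eq_mul, nsmul_eq_mul] at h1
    have h2 : coeff (R := ℚ) n (G ^ k * PowerSeries.derivative ℚ G)
        = coeff (R := ℚ) n (PowerSeries.derivative ℚ G * G ^ k) := by rw [mul_comm]
    have hk1 : ((Nat.factorial (k+1) : ℚ)) = (k+1) * (Nat.factorial k) := by
      push_cast [Nat.factorial_succ]; ring
    have h3 : ((k + 1 : ℕ) : ℚ⟦X⟧) = PowerSeries.C (R := ℚ) ((k + 1 : ℕ) : ℚ) :=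
      (map_natCast _ _).symm
    rw [h3, coeff_C_mul, h2] at h1
    rw [div_mul_eq_mul_div, ← h1, hk1]
    have hfk : (Nat.factorial k : ℚ) ≠ 0 := by positivity
    have hk0 : ((k:ℚ) + 1) ≠ 0 := by positivity
    push_cast
    field_simp
  rw [Finset.sum_congr rfl (fun k _ => hterm k)]
  have : ∀ ij ∈ Finset.HasAntidiagonal.antidiagonal n,
      coeff (R := ℚ) ij.1 (PowerSeries.derivative ℚ G) * coeff (R := ℚ) ij.2 (formalExp G)
      = ∑ k ∈ range (n + 1),
          coeff (R := ℚ) ij.1 (PowerSeries.derivative ℚ G) * coeff (R := ℚ) ij.2 (G ^ k)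
            / (Nat.factorial k) := by
    intro ij hij
    rw [aux_coeff_formalExp hG (le_of_add_le_right (Finset.HasAntidiagonal.mem_antidiagonal.1 hij).le),
      Finset.mul_sum]
    simp [mul_div_assoc]
  rw [Finset.sum_congr rfl this, Finset.sum_comm]
  refine Finset.sum_congr rfl fun k _ => ?_
  rw [coeff_mul, Finset.sum_div]

theorem quiver_dt_recursion_line (z p : ℕ → ℚ) (hz1 : z 1 = 1)
    (hyp : PowerSeries.mk (fun d => if d = 0 then 1 else z (d + 1) / (Nat.factorial (2 * d)))
      = formalExp (PowerSeries.mk fun k =>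
          if k = 0 then 0 else p k * z k / (Nat.factorial (2 * k)))) :
    ∀ d : ℕ, 2 ≤ d → z d = ∑ k ∈ Finset.Icc 1 (d - 1),
      z k * z (d - k) * p k * (Nat.choose (2 * d - 3) (2 * k - 1)) := by
  intro d hd
  obtain ⟨n, rfl⟩ : ∃ n, d = n + 2 := ⟨d - 2, by omega⟩
  set G : PowerSeries ℚ := PowerSeries.mk fun k =>
      if k = 0 then 0 else p k * z k / (Nat.factorial (2 * k)) with hGdef
  have hG : constantCoeff (R := ℚ) G = 0 := by
    rw [hGdef, ← coeff_zero_eq_constantCoeff, coeff_mk]; simp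
  have hder := aux_deriv hG
  rw [← hyp] at hder
  have heq := congrArg (coeff (R := ℚ) n) hder
  rw [coeff_derivative, coeff_mk, coeff_mul] at heq
  rw [Finset.Nat.sum_antidiagonal_eq_sum_range_succ_mk] at heq
  simp only [coeff_derivative, coeff_mk] at heq
  -- simplify hypothesis: f j = z (j+1) / (2j)!
  have hf : ∀ j : ℕ, (if j = 0 then (1:ℚ) else z (j + 1) / (Nat.factorial (2 * j)))
      = z (j + 1) / (Nat.factorial (2 * j)) := by
    intro j
    split_ifs with h
    · subst h; simp [hz1]
    · rfl
  simp only [Nat.succ_ne_zero, if_false, Nat.add_eq_zero, and_false, hf] at heq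
  -- heq : z (n+2) / (2(n+1))! * (n+1) = ∑ i in range (n+1), ...
  rw [hGdef] at heq
  simp only [coeff_mk, Nat.succ_ne_zero, if_false, hf] at heq
  have hrw : (n + 2 - 1) = n + 1 := by omega
  rw [hrw, ← Finset.Ico_add_one_right_eq_Icc, Finset.sum_Ico_eq_sum_range]
  have hrw2 : (n + 1 + 1 - 1) = n + 1 := by omega
  rw [hrw2]
  have hfact : ∀ m : ℕ, (Nat.factorial (2 * (m + 1)) : ℚ)
      = (2 * m + 2) * Nat.factorial (2 * m + 1) := by
    intro m
    rw [show 2 * (m + 1) = (2 * m + 1) + 1 by ring, Nat.factorial_succ]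
    push_cast; ring
  have key : ∀ i ∈ range (n + 1),
      z (1 + i) * z (n + 2 - (1 + i)) * p (1 + i)
        * (Nat.choose (2 * (n + 2) - 3) (2 * (1 + i) - 1) : ℚ)
      = (p (i + 1) * z (i + 1) / (Nat.factorial (2 * (i + 1))))
          * ((i : ℚ) + 1) * (z (n - i + 1) / (Nat.factorial (2 * (n - i))))
          * ((Nat.factorial (2 * (n + 1)) : ℚ) / ((n : ℚ) + 1)) := by
    intro i hi
    rw [mem_range] at hi
    have hin : i ≤ n := by omega
    have e1 : 2 * (n + 2) - 3 = 2 * n + 1 := by omega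
    have e2 : 2 * (1 + i) - 1 = 2 * i + 1 := by omega
    have e3 : n + 2 - (1 + i) = n - i + 1 := by omega
    have e4 : 1 + i = i + 1 := by omega
    rw [e1, e2, e3, e4]
    have hc := Nat.add_choose_mul_factorial_mul_factorial (2 * i + 1) (2 * (n - i))
    have e5 : 2 * i + 1 + 2 * (n - i) = 2 * n + 1 := by omega
    rw [e5] at hc
    have hcq : ((2 * n + 1).choose (2 * i + 1) : ℚ)
        = (Nat.factorial (2 * n + 1) : ℚ)
          / ((Nat.factorial (2 * i + 1) : ℚ) * (Nat.factorial (2 * (n - i)) : ℚ)) := by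
      have hsymm : (2 * n + 1).choose (2 * i + 1) = (2 * n + 1).choose (2 * (n - i)) := by
        rw [← Nat.choose_symm (by omega : 2 * i + 1 ≤ 2 * n + 1),
          show 2 * n + 1 - (2 * i + 1) = 2 * (n - i) by omega]
      rw [eq_div_iff (by positivity), ← mul_assoc, ← Nat.cast_mul, ← Nat.cast_mul, hsymm, hc]
    rw [hcq, hfact i, hfact n]
    have c1 : (Nat.factorial (2 * i + 1) : ℚ) ≠ 0 := by positivity
    have c2 : (Nat.factorial (2 * (n - i)) : ℚ) ≠ 0 := by positivity
    have c3 : ((n : ℚ) + 1) ≠ 0 := by positivity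
    have c4 : ((2 : ℚ) * i + 2) ≠ 0 := by positivity
    field_simp
  rw [Finset.sum_congr rfl key, ← Finset.sum_mul, ← heq]
  have d1 : (Nat.factorial (2 * (n + 1)) : ℚ) ≠ 0 := by positivity
  have d2 : ((n : ℚ) + 1) ≠ 0 := by positivity
  field_simp
end

section
/- Let z, p : ℕ → ℚ be sequences with z(2) = 1. Suppose that as formal power series over ℚ, 1 + Σ_{d≥1} (z(d+2)/d!)·x^d = exp( Σ_{k≥1} (p(k)·z(k)/k!)·x^k ). Then for every d ≥ 3, z(d) = Σ_{k=1}^{d−1} z(k)·z(d−k)·p(k)·C(d−3, k−1), where C denotes the binomial coefficient (with C(d−3, d−2) = 0). -/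
open PowerSeries Finset

lemma coeff_pow_zero' (G : PowerSeries ℚ) (hG : PowerSeries.constantCoeff G = 0)
    {n k : ℕ} (h : n < k) : PowerSeries.coeff n (G ^ k) = 0 := by
  have hX : (PowerSeries.X : PowerSeries ℚ) ∣ G := PowerSeries.X_dvd_iff.mpr hG
  exact PowerSeries.X_pow_dvd_iff.mp (pow_dvd_pow_of_dvd hX k) n h

noncomputable def expS (G : PowerSeries ℚ) (N : ℕ) : PowerSeries ℚ :=
  ∑ k ∈ Finset.range (N+1), PowerSeries.C ((Nat.factorial k : ℚ)⁻¹) * G ^ k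

lemma coeff_formalExp (G : PowerSeries ℚ) (hG : PowerSeries.constantCoeff G = 0)
    {n N : ℕ} (h : n ≤ N) :
    PowerSeries.coeff n (formalExp G) = PowerSeries.coeff n (expS G N) := by
  simp only [formalExp, PowerSeries.coeff_mk, expS, map_sum, PowerSeries.coeff_C_mul]
  rw [← Finset.sum_subset (Finset.range_subset_range.mpr (by omega) :
      Finset.range (n+1) ⊆ Finset.range (N+1))]
  · exact Finset.sum_congr rfl fun k _ => by rw [div_eq_inv_mul, mul_comm]
  · intro k _ hk
    rw [coeff_pow_zero' G hG (by simpa using hk), mul_zero]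

lemma deriv_term (G : PowerSeries ℚ) (k : ℕ) :
    d⁄dX ℚ (PowerSeries.C ((Nat.factorial (k+1) : ℚ)⁻¹) * G ^ (k+1))
      = d⁄dX ℚ G * (PowerSeries.C ((Nat.factorial k : ℚ)⁻¹) * G ^ k) := by
  rw [← PowerSeries.smul_eq_C_mul, Derivation.map_smul, Derivation.leibniz_pow]
  simp only [Nat.add_sub_cancel, smul_eq_mul, smul_smul, ← PowerSeries.smul_eq_C_mul]
  have h : ((k:ℚ)+1) * (((k+1).factorial : ℚ))⁻¹ = ((k.factorial : ℚ))⁻¹ := by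
    rw [Nat.factorial_succ, Nat.cast_mul, mul_inv]
    have : ((k:ℚ)+1) ≠ 0 := by positivity
    field_simp
    norm_cast
  rw [← Nat.cast_smul_eq_nsmul ℚ, smul_smul]
  push_cast
  rw [mul_comm ((((k:ℕ)+1).factorial : ℚ))⁻¹, h, mul_comm (d⁄dX ℚ G), smul_mul_assoc]

lemma deriv_expS (G : PowerSeries ℚ) (N : ℕ) :
    d⁄dX ℚ (expS G (N+1)) = d⁄dX ℚ G * expS G N := by
  rw [expS, map_sum, Finset.sum_range_succ']
  simp only [deriv_term]
  rw [expS, Finset.mul_sum]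
  simp

lemma deriv_formalExp (G : PowerSeries ℚ) (hG : PowerSeries.constantCoeff G = 0) :
    d⁄dX ℚ (formalExp G) = d⁄dX ℚ G * formalExp G := by
  ext n
  rw [PowerSeries.coeff_derivative, coeff_formalExp G hG (le_refl (n+1)),
    ← PowerSeries.coeff_derivative, deriv_expS, PowerSeries.coeff_mul,
    PowerSeries.coeff_mul]
  refine Finset.sum_congr rfl fun pq hpq => ?_
  rw [Finset.HasAntidiagonal.mem_antidiagonal] at hpq
  rw [← coeff_formalExp G hG (show pq.2 ≤ n by omega)]

theorem quiver_dt_recursion_conic (z p : ℕ → ℚ) (hz2 : z 2 = 1)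
    (hyp : PowerSeries.mk (fun d => if d = 0 then 1 else z (d + 2) / (Nat.factorial d))
      = formalExp (PowerSeries.mk fun k =>
          if k = 0 then 0 else p k * z k / (Nat.factorial k))) :
    ∀ d : ℕ, 3 ≤ d → z d = ∑ k ∈ Finset.Icc 1 (d - 1),
      z k * z (d - k) * p k * (Nat.choose (d - 3) (k - 1)) := by
  intro d hd
  obtain ⟨m, rfl⟩ : ∃ m, d = m + 3 := ⟨d - 3, by omega⟩
  set F := PowerSeries.mk (fun d => if d = 0 then (1:ℚ) else z (d + 2) / (Nat.factorial d))
    with hFdef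
  set G := PowerSeries.mk (fun k => if k = 0 then (0:ℚ) else p k * z k / (Nat.factorial k))
    with hGdef
  have hG0 : PowerSeries.constantCoeff G = 0 := by
    have := PowerSeries.coeff_zero_eq_constantCoeff (R := ℚ)
    rw [← PowerSeries.coeff_zero_eq_constantCoeff_apply, hGdef]
    simp
  have hD : d⁄dX ℚ F = d⁄dX ℚ G * F := by
    rw [hyp]; exact deriv_formalExp G hG0
  have h1 := congrArg (PowerSeries.coeff m) hD
  rw [PowerSeries.coeff_derivative, PowerSeries.coeff_mul,
    Finset.Nat.sum_antidiagonal_eq_sum_range_succ_mk] at h1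
  simp only [PowerSeries.coeff_derivative, hFdef, hGdef, PowerSeries.coeff_mk,
    Nat.succ_ne_zero, if_false] at h1
  have hFc : ∀ b : ℕ, (if b = 0 then (1:ℚ) else z (b+2) / b.factorial)
      = z (b+2) / b.factorial := by
    intro b; cases b <;> simp [hz2]
  simp only [hFc] at h1
  -- kill the top term of the goal sum
  have htop : (m + 3 - 1) = (m + 1) + 1 := by omega
  rw [htop, Finset.sum_Icc_succ_top (by omega : 1 ≤ m + 2)]
  rw [show Nat.choose (m + 3 - 3) (m + 2 - 1) = 0 from
    Nat.choose_eq_zero_of_lt (by omega)]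
  rw [← Finset.Ico_add_one_right_eq_Icc, Finset.sum_Ico_eq_sum_range]
  simp only [Nat.cast_zero, mul_zero, add_zero, show m + 1 + 1 - 1 = m + 1 from rfl]
  have hm1 : z (m+3) = (m.factorial : ℚ) * (z (m + 1 + 2) / (Nat.factorial (m+1)) * ((m:ℚ)+1)) := by
    rw [Nat.factorial_succ]
    have h1 : ((m:ℚ)+1) ≠ 0 := by positivity
    have h2 : (m.factorial : ℚ) ≠ 0 := Nat.cast_ne_zero.mpr m.factorial_ne_zero
    push_cast
    field_simp
  rw [hm1, h1, Finset.mul_sum]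
  refine Finset.sum_congr rfl fun i hi => ?_
  rw [Finset.mem_range] at hi
  have him : i ≤ m := by omega
  have hsub : m + 3 - (1 + i) = (m - i) + 2 := by omega
  rw [hsub]
  have hcQ : (m.factorial : ℚ) = (Nat.choose m i : ℚ) * i.factorial * (m-i).factorial := by
    exact_mod_cast (Nat.choose_mul_factorial_mul_factorial him).symm
  rw [show (1 + i - 1) = i from by omega, show m + 3 - 3 = m from rfl]
  rw [hcQ, Nat.factorial_succ]
  have h1 : (i.factorial:ℚ) ≠ 0 := Nat.cast_ne_zero.mpr i.factorial_ne_zero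
  have h2 : ((m-i).factorial:ℚ) ≠ 0 := Nat.cast_ne_zero.mpr (m-i).factorial_ne_zero
  have h3 : ((i:ℚ)+1) ≠ 0 := by positivity
  have h4 : ((Nat.choose m i : ℚ)) ≠ 0 := Nat.cast_ne_zero.mpr (Nat.choose_pos him |>.ne')
  push_cast
  field_simp
  ring_nf
end
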